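/- arXiv:1202.0391 — 2 statements merged into one kernel-verified Lean document; each statement's English description precedes it below -/
import Mathlib

section
/- If Z_m has a chi-squared distribution with m degrees of freedom (m a positive integer), then for all κ > 0, P(Z_m - m ≥ κ m) ≤ exp(-(m/2)(κ - log(1+κ))). -/
open MeasureTheory ProbabilityTheory

open Real in
lemma gaussian_withDensity_rw :
    gaussianReal 0 1 = volume.withDensity
      (fun x => ((Real.toNNReal (gaussianPDFReal 0 1 x) : NNReal) : ENNReal)) := by
  rw [gaussianReal_of_var_ne_zero 0 one_ne_zero]
  rfl

open Real in
lemma gaussian_pdf_mul (t : ℝ) (x : ℝ) :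
    gaussianPDFReal 0 1 x * rexp (t * x ^ 2)
      = (√(2 * π))⁻¹ * rexp (-(1/2 - t) * x ^ 2) := by
  rw [gaussianPDFReal]
  simp only [NNReal.coe_one, mul_one, sub_zero]
  rw [mul_assoc, ← Real.exp_add]
  ring_nf

open Real in
lemma gaussian_exp_sq_integrable {t : ℝ} (ht : t < 1/2) :
    Integrable (fun x => rexp (t * x ^ 2)) (gaussianReal 0 1) := by
  rw [gaussian_withDensity_rw,
    integrable_withDensity_iff_integrable_smul
      ((measurable_gaussianPDFReal 0 1).real_toNNReal)]
  have : (fun x => (Real.toNNReal (gaussianPDFReal 0 1 x)) • rexp (t * x ^ 2))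
      = fun x => (√(2 * π))⁻¹ * rexp (-(1/2 - t) * x ^ 2) := by
    ext x
    rw [NNReal.smul_def, smul_eq_mul, Real.coe_toNNReal _ (gaussianPDFReal_nonneg 0 1 x)]
    exact gaussian_pdf_mul t x
  rw [this]
  exact (integrable_exp_neg_mul_sq (by linarith)).const_mul _

open Real in
lemma gaussian_exp_sq_integral {t : ℝ} (ht : t < 1/2) :
    ∫ x, rexp (t * x ^ 2) ∂(gaussianReal 0 1) = (√(1 - 2 * t))⁻¹ := by
  rw [gaussian_withDensity_rw,
    integral_withDensity_eq_integral_smul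
      ((measurable_gaussianPDFReal 0 1).real_toNNReal)]
  have : (fun x => (Real.toNNReal (gaussianPDFReal 0 1 x)) • rexp (t * x ^ 2))
      = fun x => (√(2 * π))⁻¹ * rexp (-(1/2 - t) * x ^ 2) := by
    ext x
    rw [NNReal.smul_def, smul_eq_mul, Real.coe_toNNReal _ (gaussianPDFReal_nonneg 0 1 x)]
    exact gaussian_pdf_mul t x
  rw [this, integral_const_mul, integral_gaussian]
  have hb : (0:ℝ) < 1/2 - t := by linarith
  have h2π : (0:ℝ) < 2 * π := by positivity
  rw [show π / (1/2 - t) = (2 * π) / (1 - 2 * t) by field_simp]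
  rw [Real.sqrt_div h2π.le]
  have hs : Real.sqrt (2 * π) ≠ 0 := by positivity
  field_simp

/-- Chi-squared upper tail bound for the sum of squares of `m` i.i.d. standard normals. -/
theorem chiSq_upper_tail {Ω : Type*} [MeasurableSpace Ω] (μ : Measure Ω) [IsProbabilityMeasure μ]
    (m : ℕ) (hm : 0 < m) (X : Fin m → Ω → ℝ) (hmeas : ∀ i, Measurable (X i))
    (hindep : iIndepFun X μ)
    (hlaw : ∀ i, μ.map (X i) = gaussianReal 0 1)
    (κ : ℝ) (hκ : 0 < κ) :
    μ {ω | (∑ i, (X i ω) ^ 2) - m ≥ κ * m} ≤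
      ENNReal.ofReal (Real.exp (-(m / 2) * (κ - Real.log (1 + κ)))) := by
  have h1κ : (0:ℝ) < 1 + κ := by linarith
  set t : ℝ := κ / (2 * (1 + κ)) with htdef
  have ht0 : 0 ≤ t := by positivity
  have htlt : t < 1/2 := by
    rw [htdef, div_lt_iff₀ (by linarith)]
    nlinarith
  have h2t : 1 - 2 * t = (1 + κ)⁻¹ := by
    rw [htdef]
    field_simp
    ring
  set Y : Fin m → Ω → ℝ := fun i ω => X i ω ^ 2 with hY
  have hYmeas : ∀ i, Measurable (Y i) := fun i => (hmeas i).pow_const 2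
  have hYindep : iIndepFun Y μ :=
    hindep.comp (fun _ (x : ℝ) => x ^ 2) (fun _ => measurable_id.pow_const 2)
  have hexpmeas : AEStronglyMeasurable (fun x : ℝ => Real.exp (t * x ^ 2))
      (gaussianReal 0 1) :=
    ((measurable_id.pow_const 2).const_mul t).exp.aestronglyMeasurable
  have hint : ∀ i, Integrable (fun ω => Real.exp (t * Y i ω)) μ := by
    intro i
    have h1 : Integrable (fun x => Real.exp (t * x ^ 2)) (μ.map (X i)) := by
      rw [hlaw i]; exact gaussian_exp_sq_integrable htlt
    have := (integrable_map_measure (by rw [hlaw i]; exact hexpmeas)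
      (hmeas i).aemeasurable).mp h1
    exact this
  have hmgf : ∀ i, mgf (Y i) μ t = (Real.sqrt (1 - 2 * t))⁻¹ := by
    intro i
    have : mgf (Y i) μ t = ∫ x, Real.exp (t * x ^ 2) ∂(μ.map (X i)) := by
      rw [integral_map (hmeas i).aemeasurable (by rw [hlaw i]; exact hexpmeas)]
      rfl
    rw [this, hlaw i, gaussian_exp_sq_integral htlt]
  have hS : mgf (∑ i, Y i) μ t = ((Real.sqrt (1 - 2 * t))⁻¹) ^ m := by
    rw [hYindep.mgf_sum hYmeas Finset.univ]
    simp [hmgf]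
  have hintS : Integrable (fun ω => Real.exp (t * (∑ i, Y i) ω)) μ :=
    hYindep.integrable_exp_mul_sum hYmeas (fun i _ => hint i)
  have hcher := measure_ge_le_exp_mul_mgf (μ := μ) ((1 + κ) * m) ht0 hintS
  rw [hS] at hcher
  have hval : Real.exp (-t * ((1 + κ) * m)) * ((Real.sqrt (1 - 2 * t))⁻¹) ^ m
      = Real.exp (-(m / 2) * (κ - Real.log (1 + κ))) := by
    rw [h2t, Real.sqrt_inv, inv_inv]
    have hsq : Real.sqrt (1 + κ) = Real.exp (Real.log (1 + κ) / 2) := by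
      rw [Real.sqrt_eq_rpow, Real.rpow_def_of_pos h1κ]
      ring_nf
    rw [hsq, ← Real.exp_nat_mul, ← Real.exp_add]
    congr 1
    rw [htdef]
    field_simp
    ring
  rw [hval] at hcher
  have hset : {ω | (∑ i, (X i ω) ^ 2) - (m:ℝ) ≥ κ * m}
      = {ω | (1 + κ) * (m:ℝ) ≤ (∑ i, Y i) ω} := by
    ext ω
    simp only [Set.mem_setOf_eq, Finset.sum_apply, hY, ge_iff_le]
    have hh : (1 + κ) * (m:ℝ) = κ * m + m := by ring
    constructor <;> intro h <;> linarith
  rw [hset]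
  calc μ {ω | (1 + κ) * (m:ℝ) ≤ (∑ i, Y i) ω}
      = ENNReal.ofReal (μ {ω | (1 + κ) * (m:ℝ) ≤ (∑ i, Y i) ω}).toReal :=
        (ENNReal.ofReal_toReal (measure_ne_top μ _)).symm
    _ ≤ _ := ENNReal.ofReal_le_ofReal hcher
end

section
/- If Z_m has a chi-squared distribution with m degrees of freedom (m a positive integer), then for all 0 < κ < 1, P(Z_m - m ≤ -κ m) ≤ exp(-(m/2)(-κ - log(1-κ))). -/
open MeasureTheory ProbabilityTheory Real
open scoped ENNReal NNReal

lemma gauss_sq_int (s : ℝ) (hs : 0 < s) :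
    ∫ x, Real.exp (-s * x ^ 2) ∂(gaussianReal 0 1) = (Real.sqrt (1 + 2*s))⁻¹ := by
  rw [gaussianReal_of_var_ne_zero _ one_ne_zero]
  unfold gaussianPDF
  have : (fun x => ENNReal.ofReal (gaussianPDFReal 0 1 x))
      = fun x => ((gaussianPDFReal 0 1 x).toNNReal : ℝ≥0∞) := rfl
  rw [this, integral_withDensity_eq_integral_smul
    ((measurable_gaussianPDFReal 0 1).real_toNNReal)]
  have hpt : ∀ x : ℝ, ((gaussianPDFReal 0 1 x).toNNReal : ℝ) • Real.exp (-s * x ^ 2)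
      = (Real.sqrt (2 * π))⁻¹ * Real.exp (-(s + 1/2) * x ^ 2) := by
    intro x
    rw [smul_eq_mul, Real.coe_toNNReal _ (gaussianPDFReal_nonneg 0 1 x)]
    unfold gaussianPDFReal
    rw [mul_assoc, ← Real.exp_add]
    norm_num
    exact Or.inl (by ring)
  simp_rw [NNReal.smul_def, hpt]
  rw [integral_const_mul, integral_gaussian]
  have h1 : (0:ℝ) < s + 1/2 := by linarith
  rw [show π/(s+1/2) = (2*π) * (1+2*s)⁻¹ by field_simp; ring]
  rw [Real.sqrt_mul (by positivity : (0:ℝ) ≤ 2*π) ((1+2*s)⁻¹), Real.sqrt_inv, ← mul_assoc,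
    inv_mul_cancel₀ (by positivity), one_mul]


lemma int_exp_neg_sq {Ω : Type*} [MeasurableSpace Ω] (μ : Measure Ω) [IsProbabilityMeasure μ]
    (f : Ω → ℝ) (hf : Measurable f) (hnn : ∀ ω, 0 ≤ f ω) (s : ℝ) (hs : 0 < s) :
    Integrable (fun ω => Real.exp (-s * f ω)) μ := by
  refine Integrable.mono' (integrable_const 1)
    ((hf.const_mul (-s)).exp.aestronglyMeasurable) (ae_of_all _ fun ω => ?_)
  rw [Real.norm_eq_abs, abs_of_pos (Real.exp_pos _)]
  exact Real.exp_le_one_iff.mpr (by nlinarith [hnn ω])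

lemma mgf_sq_gauss {Ω : Type*} [MeasurableSpace Ω] (μ : Measure Ω)
    (X : Ω → ℝ) (hX : Measurable X) (hlaw : μ.map X = gaussianReal 0 1)
    (s : ℝ) (hs : 0 < s) :
    mgf (fun ω => X ω ^ 2) μ (-s) = (Real.sqrt (1 + 2*s))⁻¹ := by
  have : mgf (fun ω => X ω ^ 2) μ (-s) = ∫ ω, Real.exp (-s * X ω ^ 2) ∂μ := rfl
  rw [this, ← gauss_sq_int s hs, ← hlaw]
  exact (integral_map hX.aemeasurable
    (((measurable_id.pow_const 2).const_mul (-s)).exp.aestronglyMeasurable)).symm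

/-- Chi-squared lower tail bound for the sum of squares of `m` i.i.d. standard normals. -/
theorem chiSq_lower_tail {Ω : Type*} [MeasurableSpace Ω] (μ : Measure Ω) [IsProbabilityMeasure μ]
    (m : ℕ) (hm : 0 < m) (X : Fin m → Ω → ℝ) (hmeas : ∀ i, Measurable (X i))
    (hindep : iIndepFun X μ)
    (hlaw : ∀ i, μ.map (X i) = gaussianReal 0 1)
    (κ : ℝ) (hκ0 : 0 < κ) (hκ1 : κ < 1) :
    μ {ω | (∑ i, (X i ω) ^ 2) - m ≤ -κ * m} ≤
      ENNReal.ofReal (Real.exp (-(m / 2) * (-κ - Real.log (1 - κ)))) := by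
  have h1κ : (0:ℝ) < 1 - κ := by linarith
  set s : ℝ := κ / (2 * (1 - κ)) with hs_def
  have hs : 0 < s := by positivity
  set Y : Fin m → Ω → ℝ := fun i ω => X i ω ^ 2 with hY
  have hYmeas : ∀ i, Measurable (Y i) := fun i => (hmeas i).pow_const 2
  have hYindep : iIndepFun Y μ :=
    hindep.comp (fun _ x => x ^ 2) (fun _ => measurable_id.pow_const 2)
  have hsum : ∀ ω, (∑ i, Y i) ω = ∑ i, X i ω ^ 2 := by
    intro ω; simp [Finset.sum_apply, hY]
  have h_int : Integrable (fun ω => Real.exp (-s * (∑ i, Y i) ω)) μ := by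
    refine int_exp_neg_sq μ _ ?_ ?_ s hs
    · rw [show (∑ i, Y i) = fun ω => ∑ i, X i ω ^ 2 from funext hsum]
      exact Finset.measurable_sum _ fun i _ => (hmeas i).pow_const 2
    · intro ω; rw [hsum]; positivity
  have hch := measure_le_le_exp_mul_mgf (μ := μ) (X := ∑ i, Y i) ((1-κ)*m)
    (neg_nonpos.mpr hs.le) h_int
  have hmgf : mgf (∑ i, Y i) μ (-s) = ((Real.sqrt (1 + 2*s))⁻¹) ^ m := by
    rw [hYindep.mgf_sum hYmeas]
    rw [Finset.prod_congr rfl fun i _ => mgf_sq_gauss μ (X i) (hmeas i) (hlaw i) s hs]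
    simp
  have h12s : 1 + 2*s = (1-κ)⁻¹ := by rw [hs_def]; field_simp; ring
  have hrhs : Real.exp (-(-s) * ((1-κ)*m)) * mgf (∑ i, Y i) μ (-s)
      = Real.exp (-(m / 2) * (-κ - Real.log (1 - κ))) := by
    rw [hmgf, h12s, Real.sqrt_inv, inv_inv,
      show Real.sqrt (1-κ) = Real.exp (Real.log (1-κ) / 2) by
        rw [← Real.log_sqrt h1κ.le, Real.exp_log (Real.sqrt_pos.mpr h1κ)],
      ← Real.exp_nat_mul, ← Real.exp_add]
    congr 1
    have h2 : (2:ℝ) - κ*2 ≠ 0 := by linarith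
    rw [hs_def]
    field_simp
    ring
  have hset : {ω | (∑ i, (X i ω) ^ 2) - m ≤ -κ * m} = {ω | (∑ i, Y i) ω ≤ (1-κ)*m} := by
    ext ω; simp only [Set.mem_setOf_eq, hsum]; constructor <;> intro h <;> nlinarith
  rw [hset, ← ENNReal.ofReal_toReal (measure_ne_top μ _)]
  exact ENNReal.ofReal_le_ofReal (hch.trans_eq hrhs)
end
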